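/- arXiv:1404.5679 — 3 statements merged into one kernel-verified Lean document; each statement's English description precedes it below -/
import Mathlib

section
/- For integers a, b and natural numbers s ≤ t, define the Gaussian binomial [[N, t]] = ∏_{i=1}^{t} (v^{2(N-i+1)} - 1)/(v^{2i} - 1) and its symmetric version [N, t] = v^{-t(N-t)} [[N, t]], elements of ℤ[v, v^{-1}]. Then for all integers a, b and all natural numbers t, the Vandermonde-type identity holds: [a+b, t] = ∑_{s=0}^{t} v^{a(t-s) - s·b} · [a, s] · [b, t-s]. -/
/-- The indeterminate `v`, viewed in the field of rational functions `ℚ(v)`. -/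
noncomputable def v : RatFunc ℚ := RatFunc.X

/-- The Gaussian binomial `[[N, t]] = ∏_{i=1}^{t} (v^{2(N-i+1)} - 1)/(v^{2i} - 1)`. -/
noncomputable def dblBrack (N : ℤ) (t : ℕ) : RatFunc ℚ :=
  ∏ i ∈ Finset.range t, (v ^ (2 * (N - (i : ℤ))) - 1) / (v ^ (2 * ((i : ℤ) + 1)) - 1)

/-- The symmetric Gaussian binomial `[N, t] = v^{-t(N-t)} [[N, t]]`. -/
noncomputable def symBrack (N : ℤ) (t : ℕ) : RatFunc ℚ :=
  v ^ (-(t : ℤ) * (N - (t : ℤ))) * dblBrack N t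

lemma hv : v ≠ 0 := RatFunc.X_ne_zero

lemma vpow_ne_one (n : ℤ) (hn : 0 < n) : v ^ n ≠ 1 := by
  intro h
  lift n to ℕ using hn.le
  have hn' : 0 < n := by exact_mod_cast hn
  rw [zpow_natCast] at h
  have h0 : ((Polynomial.X ^ n - 1 : Polynomial ℚ)) = 0 := by
    apply RatFunc.algebraMap_injective ℚ |>.eq_iff.mp
    push_cast [map_sub, map_pow, map_one, RatFunc.algebraMap_X]
    rw [show (RatFunc.X : RatFunc ℚ) = v from rfl, h, sub_self]
  have := congrArg (Polynomial.eval 0) h0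
  simp [zero_pow hn'.ne'] at this

lemma vpow_sub_one_ne (n : ℤ) (hn : 0 < n) : v ^ n - 1 ≠ 0 :=
  sub_ne_zero.2 (vpow_ne_one n hn)

lemma hden (t : ℕ) : v ^ (2 * ((t : ℤ) + 1)) - 1 ≠ 0 :=
  vpow_sub_one_ne _ (by positivity)

lemma merge2 (e f1 f2 : ℤ) (D : RatFunc ℚ) (h : e = f1 + f2) :
    v ^ e * D = v ^ f1 * (v ^ f2 * D) := by
  rw [h, zpow_add₀ hv]; ring

lemma merge2' (e1 e2 f1 f2 : ℤ) (D : RatFunc ℚ) (h : e1 + e2 = f1 + f2) :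
    v ^ e1 * (v ^ e2 * D) = v ^ f1 * (v ^ f2 * D) := by
  rw [← mul_assoc, ← mul_assoc, ← zpow_add₀ hv, ← zpow_add₀ hv, h]

lemma merge3 (e1 e2 f1 f2 : ℤ) (A B : RatFunc ℚ) (h : e1 + e2 = f1 + f2) :
    v ^ e1 * A * (v ^ e2 * B) = v ^ f1 * (v ^ f2 * A * B) := by
  calc v ^ e1 * A * (v ^ e2 * B) = v ^ e1 * (v ^ e2 * (A * B)) := by ring
  _ = v ^ f1 * (v ^ f2 * (A * B)) := merge2' _ _ _ _ _ h
  _ = _ := by ring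

lemma dblBrack_zero (N : ℤ) : dblBrack N 0 = 1 := by simp [dblBrack]

lemma dblBrack_succ (N : ℤ) (t : ℕ) :
    dblBrack N (t + 1) =
      dblBrack N t * ((v ^ (2 * (N - (t : ℤ))) - 1) / (v ^ (2 * ((t : ℤ) + 1)) - 1)) :=
  Finset.prod_range_succ _ t

lemma dblBrack_shift (N : ℤ) (t : ℕ) :
    dblBrack (N + 1) t * (v ^ (2 * (N + 1 - (t : ℤ))) - 1) =
      dblBrack N t * (v ^ (2 * (N + 1)) - 1) := by
  induction t with
  | zero =>
    rw [dblBrack_zero, dblBrack_zero]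
    norm_num
  | succ t ih =>
    rw [dblBrack_succ, dblBrack_succ,
      show (2 * (N + 1 - ((t + 1 : ℕ) : ℤ))) = 2 * (N - (t : ℤ)) by push_cast; ring,
      show (2 * ((N : ℤ) + 1 - (t : ℤ))) = 2 * (N + 1 - (t : ℤ)) by ring]
    have hd := hden t
    field_simp
    linear_combination (v ^ (2 * (N - (t : ℤ))) - 1) * ih

lemma dblBrack_pascal (N : ℤ) (t : ℕ) :
    dblBrack (N + 1) (t + 1) =
      dblBrack N (t + 1) + v ^ (2 * (N - (t : ℤ))) * dblBrack N t := by
  have hd := hden t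
  have hs := dblBrack_shift N t
  have hz : v ^ (2 * (N + 1)) = v ^ (2 * (N - (t : ℤ))) * v ^ (2 * ((t : ℤ) + 1)) := by
    rw [← zpow_add₀ hv]; congr 1; ring
  rw [dblBrack_succ, dblBrack_succ,
    show (2 * ((N : ℤ) + 1 - (t : ℤ))) = 2 * (N + 1 - (t : ℤ)) by ring]
  field_simp
  linear_combination hs + dblBrack N t * hz

lemma symBrack_zero (N : ℤ) : symBrack N 0 = 1 := by
  simp [symBrack, dblBrack_zero]

lemma symBrack_pascal (N : ℤ) (t : ℕ) :
    symBrack (N + 1) (t + 1) =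
      v ^ (-((t : ℤ) + 1)) * symBrack N (t + 1) + v ^ (N - (t : ℤ)) * symBrack N t := by
  rw [symBrack, symBrack, symBrack, dblBrack_pascal, mul_add]
  congr 1
  · exact merge2 _ _ _ _ (by push_cast; ring)
  · exact merge2' _ _ _ _ _ (by push_cast; ring)

lemma symBrack_top_zero (u : ℕ) (h : u ≠ 0) : symBrack 0 u = 0 := by
  have h0 : dblBrack 0 u = 0 := by
    apply Finset.prod_eq_zero (Finset.mem_range.2 (Nat.pos_of_ne_zero h))
    norm_num
  simp [symBrack, h0]

noncomputable def S (a b : ℤ) (t : ℕ) : RatFunc ℚ :=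
  ∑ s ∈ Finset.range (t + 1),
    v ^ (a * ((t : ℤ) - (s : ℤ)) - (s : ℤ) * b) * symBrack a s * symBrack b (t - s)

lemma S_succ (a b : ℤ) (t : ℕ) :
    S a (b + 1) (t + 1) =
      v ^ (-((t : ℤ) + 1)) * S a b (t + 1) + v ^ (a + b - (t : ℤ)) * S a b t := by
  unfold S
  rw [Finset.sum_range_succ]
  have hsum : ∑ s ∈ Finset.range (t + 1),
      v ^ (a * (((t+1 : ℕ) : ℤ) - (s : ℤ)) - (s : ℤ) * (b + 1)) * symBrack a s *
        symBrack (b + 1) (t + 1 - s) =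
      ∑ s ∈ Finset.range (t + 1),
        (v ^ (-((t : ℤ) + 1)) *
            (v ^ (a * (((t+1 : ℕ) : ℤ) - (s : ℤ)) - (s : ℤ) * b) * symBrack a s *
              symBrack b (t + 1 - s)) +
          v ^ (a + b - (t : ℤ)) *
            (v ^ (a * ((t : ℤ) - (s : ℤ)) - (s : ℤ) * b) * symBrack a s *
              symBrack b (t - s))) := by
    apply Finset.sum_congr rfl
    intro s hs
    have hs' : s < t + 1 := Finset.mem_range.mp hs
    obtain ⟨u, rfl⟩ : ∃ u, t = s + u := ⟨t - s, by omega⟩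
    rw [show s + u + 1 - s = u + 1 by omega, show s + u - s = u by omega,
      symBrack_pascal b u, mul_add]
    congr 1
    · exact merge3 _ _ _ _ _ _ (by push_cast; ring)
    · exact merge3 _ _ _ _ _ _ (by push_cast; ring)
  have hlast :
      v ^ (a * (((t+1 : ℕ) : ℤ) - ((t+1 : ℕ) : ℤ)) - ((t+1 : ℕ) : ℤ) * (b + 1)) *
          symBrack a (t + 1) * symBrack (b + 1) (t + 1 - (t + 1)) =
      v ^ (-((t : ℤ) + 1)) *
        (v ^ (a * (((t+1 : ℕ) : ℤ) - ((t+1 : ℕ) : ℤ)) - ((t+1 : ℕ) : ℤ) * b) *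
          symBrack a (t + 1) * symBrack b (t + 1 - (t + 1))) := by
    rw [Nat.sub_self, symBrack_zero, symBrack_zero, mul_one, mul_one]
    exact merge2 _ _ _ _ (by push_cast; ring)
  rw [hsum, hlast, Finset.sum_add_distrib, ← Finset.mul_sum, ← Finset.mul_sum]
  conv_rhs => rw [Finset.sum_range_succ]
  ring

lemma main_lemma (t : ℕ) : ∀ a b : ℤ, symBrack (a + b) t = S a b t := by
  induction t with
  | zero =>
    intro a b
    simp [S, symBrack_zero]
  | succ t ih =>
    intro a b
    induction b using Int.induction_on with
    | zero =>
      rw [add_zero]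
      unfold S
      rw [Finset.sum_range_succ]
      have hz : ∀ s ∈ Finset.range (t + 1),
          v ^ (a * (((t+1 : ℕ) : ℤ) - (s : ℤ)) - (s : ℤ) * 0) * symBrack a s *
            symBrack 0 (t + 1 - s) = 0 := by
        intro s hs
        have hs' : s < t + 1 := Finset.mem_range.mp hs
        rw [symBrack_top_zero _ (by omega), mul_zero]
      rw [Finset.sum_eq_zero hz, zero_add, Nat.sub_self, symBrack_zero, mul_one,
        show (a * (((t+1 : ℕ) : ℤ) - ((t+1 : ℕ) : ℤ)) - ((t+1 : ℕ) : ℤ) * 0) = 0 by ring,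
        zpow_zero, one_mul]
    | succ b hb =>
      rw [show a + ((b : ℤ) + 1) = (a + (b : ℤ)) + 1 by ring, S_succ,
        symBrack_pascal (a + (b : ℤ)) t, hb, ih a (b : ℤ)]
    | pred b hb =>
      have key := S_succ a (-(b : ℤ) - 1) t
      have pas := symBrack_pascal (a + (-(b : ℤ) - 1)) t
      rw [show a + (-(b : ℤ) - 1) + 1 = a + -(b : ℤ) by ring] at pas
      rw [show (-(b : ℤ) - 1) + 1 = -(b : ℤ) by ring] at key
      rw [hb, ih a (-(b : ℤ) - 1)] at pas
      have h2 : v ^ (-((t : ℤ) + 1)) * symBrack (a + (-(b : ℤ) - 1)) (t + 1) =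
          v ^ (-((t : ℤ) + 1)) * S a (-(b : ℤ) - 1) (t + 1) := by
        linear_combination key - pas
      exact mul_left_cancel₀ (zpow_ne_zero _ hv) h2


/-- Vandermonde-type identity:
`[a+b, t] = ∑_{s=0}^{t} v^{a(t-s) - s·b} · [a, s] · [b, t-s]`. -/
theorem symBrack_add (a b : ℤ) (t : ℕ) :
    symBrack (a + b) t =
      ∑ s ∈ Finset.range (t + 1),
        v ^ (a * ((t : ℤ) - (s : ℤ)) - (s : ℤ) * b) * symBrack a s * symBrack b (t - s) :=
  main_lemma t a b
end

section
/- Let n ≥ 2 and let A ∈ Θ±(n) be an n-periodic ℤ×ℤ matrix with natural-number entries, zero diagonal, and finitely many nonzero entries in each row and column modulo periodicity. Define ‖A‖ = ∑_{i<j, 1≤i≤n} C(j−i+1, 2)·(a_{i,j} + a_{j,i}). If B ∈ Θ±(n) satisfies σ_{i,j}(B) ≤ σ_{i,j}(A) for all i ≠ j with strict inequality for at least one pair (i.e. B ≺ A), then ‖B‖ < ‖A‖. -/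
private lemma auxSum (N : ℕ) : ∀ s : ℤ, (∑ a ∈ Finset.Icc s (s + N), (s + N - a).toNat)
    = (N + 1).choose 2 := by
  induction N with
  | zero => intro s; rw [show s + ((0:ℕ):ℤ) = s by omega, Finset.Icc_self, Finset.sum_singleton]; simp
  | succ m ih =>
    intro s
    have h1 : Finset.Icc s (s + (m+1:ℕ)) = insert s (Finset.Icc (s+1) ((s+1) + (m:ℕ))) := by
      ext x; simp only [Finset.mem_insert, Finset.mem_Icc]; omega
    rw [h1, Finset.sum_insert (by simp [Finset.mem_Icc])]
    have h2 : ∀ a ∈ Finset.Icc (s+1) ((s+1) + (m:ℕ)), (s + ((m+1:ℕ):ℤ) - a).toNat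
        = ((s+1) + (m:ℕ) - a).toNat := by
      intro a _; congr 1; push_cast; ring
    rw [Finset.sum_congr rfl h2, ih (s+1)]
    rw [show (s + ((m+1:ℕ):ℤ) - s).toNat = m + 1 by push_cast; omega]
    rw [Nat.choose_succ_succ (m+1) 1, Nat.choose_one_right]

private lemma auxCount (s t : ℤ) (hst : s ≤ t) :
    (((Finset.Icc s t) ×ˢ (Finset.Icc s t)).filter (fun p => p.1 < p.2)).card
      = (t - s + 1).toNat.choose 2 := by
  rw [Finset.card_filter, Finset.sum_product]
  have h1 : ∀ a ∈ Finset.Icc s t, (∑ b ∈ Finset.Icc s t, if a < b then 1 else 0)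
      = (t - a).toNat := by
    intro a ha
    rw [← Finset.card_filter]
    have : (Finset.Icc s t).filter (fun b => a < b) = Finset.Icc (a+1) t := by
      ext x; simp only [Finset.mem_filter, Finset.mem_Icc]
      simp only [Finset.mem_Icc] at ha; omega
    rw [this, Int.card_Icc]; congr 1; omega
  rw [Finset.sum_congr rfl h1]
  obtain ⟨N, hN⟩ : ∃ N : ℕ, t = s + N := ⟨(t - s).toNat, by omega⟩
  subst hN
  rw [auxSum N s]; congr 1; omega

/-- `kdiv n x` is the unique `k` with `x - k*n ∈ [1, n]`. -/
private def kdiv (n : ℕ) (x : ℤ) : ℤ := (x - 1) / (n : ℤ)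

private lemma kdiv_rep {n : ℕ} (hn : 0 < n) (x : ℤ) :
    1 ≤ x - kdiv n x * n ∧ x - kdiv n x * n ≤ n := by
  have hn' : (0:ℤ) < n := by exact_mod_cast hn
  have h := Int.mul_ediv_add_emod (x - 1) n
  have h1 := Int.emod_nonneg (x - 1) (by omega : (n:ℤ) ≠ 0)
  have h2 := Int.emod_lt_of_pos (x - 1) hn'
  have h3 : (x - 1) / (n:ℤ) * n = n * ((x - 1) / (n:ℤ)) := mul_comm _ _
  unfold kdiv; omega

private lemma kdiv_shift {n : ℕ} (hn : 0 < n) (x k : ℤ) :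
    kdiv n (x + k * n) = kdiv n x + k := by
  unfold kdiv
  rw [show x + k * n - 1 = (x - 1) + k * n by ring]
  rw [Int.add_mul_ediv_right _ _ (by exact_mod_cast hn.ne' : (n:ℤ) ≠ 0)]

private lemma kdiv_zero_of {n : ℕ} (x : ℤ) (h1 : 1 ≤ x) (h2 : x ≤ n) : kdiv n x = 0 := by
  unfold kdiv
  apply Int.ediv_eq_zero_of_lt <;> omega

/-- The set `Θ±(n)` of `ℤ×ℤ` matrices over `ℕ`, `n`-periodic along the diagonal, with
zero diagonal and finitely many nonzero entries in each row and column modulo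
periodicity. -/
def ThetaPM (n : ℕ) : Set (ℤ → ℤ → ℕ) :=
  {A | (∀ i j : ℤ, A (i + n) (j + n) = A i j) ∧
       (∀ i : ℤ, A i i = 0) ∧
       (∀ i : ℤ, {j : ℤ | A i j ≠ 0}.Finite ∧ {j : ℤ | A j i ≠ 0}.Finite)}

/-- `σ_{i,j}(A) = ∑_{s ≤ i, t ≥ j} a_{s,t}` if `i < j`, and
`σ_{i,j}(A) = ∑_{s ≥ i, t ≤ j} a_{s,t}` if `i > j`. -/
noncomputable def sigmaijN (A : ℤ → ℤ → ℕ) (i j : ℤ) : ℕ :=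
  if i < j then ∑ᶠ p ∈ {p : ℤ × ℤ | p.1 ≤ i ∧ j ≤ p.2}, A p.1 p.2
  else ∑ᶠ p ∈ {p : ℤ × ℤ | i ≤ p.1 ∧ p.2 ≤ j}, A p.1 p.2

/-- `‖A‖ = ∑_{1 ≤ i ≤ n, i < j} C(j−i+1, 2)·(a_{i,j} + a_{j,i})`. -/
noncomputable def normA (n : ℕ) (A : ℤ → ℤ → ℕ) : ℕ :=
  ∑ᶠ p ∈ {p : ℤ × ℤ | 1 ≤ p.1 ∧ p.1 ≤ (n : ℤ) ∧ p.1 < p.2},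
    ((p.2 - p.1 + 1).toNat.choose 2) * (A p.1 p.2 + A p.2 p.1)

/-- The strict relation `B ≺ A`: `σ_{i,j}(B) ≤ σ_{i,j}(A)` for all `i ≠ j`, with
strict inequality for at least one pair. -/
def precRel (B A : ℤ → ℤ → ℕ) : Prop :=
  (∀ i j : ℤ, i ≠ j → sigmaijN B i j ≤ sigmaijN A i j) ∧
  ∃ i j : ℤ, i ≠ j ∧ sigmaijN B i j < sigmaijN A i j

private lemma shiftPer {n : ℕ} {A : ℤ → ℤ → ℕ}
    (hper : ∀ i j : ℤ, A (i + n) (j + n) = A i j) (k i j : ℤ) :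
    A (i + k * n) (j + k * n) = A i j := by
  induction k using Int.induction_on with
  | zero => simp
  | succ m ih =>
    have := hper (i + m * n) (j + m * n)
    rw [show i + ((m:ℤ)+1) * n = i + m * n + n by ring,
        show j + ((m:ℤ)+1) * n = j + m * n + n by ring]
    rw [this, ih]
  | pred m ih =>
    have := hper (i + (-(m:ℤ)-1) * n) (j + (-(m:ℤ)-1) * n)
    rw [show i + (-(m:ℤ)-1) * n + n = i + -(m:ℤ) * n by ring,
        show j + (-(m:ℤ)-1) * n + n = j + -(m:ℤ) * n by ring] at this
    rw [← this]
    exact ih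

private lemma exists_bound {n : ℕ} (hn : 0 < n) {A : ℤ → ℤ → ℕ} (hA : A ∈ ThetaPM n) :
    ∃ D : ℤ, 0 ≤ D ∧ ∀ s t : ℤ, A s t ≠ 0 → |t - s| ≤ D := by
  obtain ⟨hper, -, hfin⟩ := hA
  have hTfin : (⋃ s ∈ Set.Icc (1:ℤ) (n:ℤ), (fun t => |t - s|) '' {t | A s t ≠ 0}).Finite := by
    apply Set.Finite.biUnion (Set.finite_Icc _ _)
    intro s _
    exact ((hfin s).1).image _
  obtain ⟨D₀, hD₀⟩ := hTfin.bddAbove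
  refine ⟨max D₀ 0, le_max_right _ _, ?_⟩
  intro s t hst
  set k := kdiv n s with hk
  have hrep := kdiv_rep hn s
  have hA' : A (s - k * n) (t - k * n) ≠ 0 := by
    have := shiftPer hper k (s - k * n) (t - k * n)
    rw [show s - k * n + k * n = s by ring, show t - k * n + k * n = t by ring] at this
    rw [← this]; exact hst
  have hmem : |t - s| ∈ ⋃ s ∈ Set.Icc (1:ℤ) (n:ℤ), (fun t => |t - s|) '' {t | A s t ≠ 0} := by
    refine Set.mem_biUnion (Set.mem_Icc.mpr ⟨hrep.1, hrep.2⟩) ?_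
    refine ⟨t - k * n, hA', ?_⟩
    show |t - k * n - (s - k * n)| = |t - s|
    congr 1; ring
  exact le_trans (hD₀ hmem) (le_max_left _ _)

private lemma sigma_upper_eq {A : ℤ → ℤ → ℕ} {D : ℤ}
    (hbd : ∀ s t : ℤ, A s t ≠ 0 → |t - s| ≤ D) (i j : ℤ) (hij : i < j) :
    sigmaijN A i j
      = ∑ p ∈ (Finset.Icc (j - D) i) ×ˢ (Finset.Icc j (i + D)), A p.1 p.2 := by
  rw [sigmaijN, if_pos hij]
  apply finsum_mem_eq_sum_of_inter_support_eq
  ext p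
  simp only [Set.mem_inter_iff, Set.mem_setOf_eq, Function.mem_support, Finset.coe_product,
    Set.mem_prod, Finset.mem_coe, Finset.mem_Icc]
  constructor
  · rintro ⟨⟨h1, h2⟩, h3⟩
    have := abs_le.mp (hbd p.1 p.2 h3)
    exact ⟨⟨⟨by omega, h1⟩, ⟨h2, by omega⟩⟩, h3⟩
  · rintro ⟨⟨⟨-, h1⟩, h2, -⟩, h3⟩
    exact ⟨⟨h1, h2⟩, h3⟩

private lemma sigma_lower_eq {A : ℤ → ℤ → ℕ} {D : ℤ}
    (hbd : ∀ s t : ℤ, A s t ≠ 0 → |t - s| ≤ D) (i j : ℤ) (hij : j < i) :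
    sigmaijN A i j
      = ∑ p ∈ (Finset.Icc i (j + D)) ×ˢ (Finset.Icc (i - D) j), A p.1 p.2 := by
  rw [sigmaijN, if_neg (by omega)]
  apply finsum_mem_eq_sum_of_inter_support_eq
  ext p
  simp only [Set.mem_inter_iff, Set.mem_setOf_eq, Function.mem_support, Finset.coe_product,
    Set.mem_prod, Finset.mem_coe, Finset.mem_Icc]
  constructor
  · rintro ⟨⟨h1, h2⟩, h3⟩
    have := abs_le.mp (hbd p.1 p.2 h3)
    exact ⟨⟨⟨h1, by omega⟩, ⟨by omega, h2⟩⟩, h3⟩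
  · rintro ⟨⟨⟨h1, -⟩, -, h2⟩, h3⟩
    exact ⟨⟨h1, h2⟩, h3⟩

private lemma sigma_upper_zero {A : ℤ → ℤ → ℕ} {D : ℤ} (hD : 0 ≤ D)
    (hbd : ∀ s t : ℤ, A s t ≠ 0 → |t - s| ≤ D) (i j : ℤ) (hij : i + D < j) :
    sigmaijN A i j = 0 := by
  rw [sigma_upper_eq hbd i j (by omega), Finset.Icc_eq_empty (by omega : ¬ j ≤ i + D),
    Finset.product_empty, Finset.sum_empty]

private lemma sigma_lower_zero {A : ℤ → ℤ → ℕ} {D : ℤ} (hD : 0 ≤ D)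
    (hbd : ∀ s t : ℤ, A s t ≠ 0 → |t - s| ≤ D) (i j : ℤ) (hij : j + D < i) :
    sigmaijN A i j = 0 := by
  rw [sigma_lower_eq hbd i j (by omega), Finset.Icc_eq_empty (by omega : ¬ j + D ≥ i)]
  rw [Finset.empty_product, Finset.sum_empty]

private lemma sigma_shift {n : ℕ} {A : ℤ → ℤ → ℕ}
    (hper : ∀ i j : ℤ, A (i + n) (j + n) = A i j) (k i j : ℤ) :
    sigmaijN A (i + k * n) (j + k * n) = sigmaijN A i j := by
  unfold sigmaijN
  by_cases hij : i < j
  · rw [if_pos hij, if_pos (by omega : i + k * n < j + k * n)]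
    refine (finsum_mem_eq_of_bijOn (fun p : ℤ × ℤ => (p.1 + k * n, p.2 + k * n))
      ⟨?_, ?_, ?_⟩ ?_).symm
    · rintro ⟨a, b⟩ ⟨h1, h2⟩
      exact ⟨by simp only at h1 ⊢; omega, by simp only at h2 ⊢; omega⟩
    · rintro ⟨a, b⟩ - ⟨c, d⟩ - hcd
      simp only [Prod.mk.injEq] at hcd ⊢
      omega
    · rintro ⟨a, b⟩ ⟨h1, h2⟩
      refine ⟨(a - k * n, b - k * n), ⟨by simp only at h1 ⊢; omega, by simp only at h2 ⊢; omega⟩, ?_⟩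
      simp only [Prod.mk.injEq]
      constructor <;> ring
    · rintro ⟨a, b⟩ -
      exact (shiftPer hper k a b).symm
  · rw [if_neg hij, if_neg (by omega : ¬ (i + k * n < j + k * n))]
    refine (finsum_mem_eq_of_bijOn (fun p : ℤ × ℤ => (p.1 + k * n, p.2 + k * n))
      ⟨?_, ?_, ?_⟩ ?_).symm
    · rintro ⟨a, b⟩ ⟨h1, h2⟩
      exact ⟨by simp only at h1 ⊢; omega, by simp only at h2 ⊢; omega⟩
    · rintro ⟨a, b⟩ - ⟨c, d⟩ - hcd
      simp only [Prod.mk.injEq] at hcd ⊢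
      omega
    · rintro ⟨a, b⟩ ⟨h1, h2⟩
      refine ⟨(a - k * n, b - k * n), ⟨by simp only at h1 ⊢; omega, by simp only at h2 ⊢; omega⟩, ?_⟩
      simp only [Prod.mk.injEq]
      constructor <;> ring
    · rintro ⟨a, b⟩ -
      exact (shiftPer hper k a b).symm

private lemma sigma_reflect (c : ℤ) (M : ℤ → ℤ → ℕ) (i j : ℤ) (hij : i ≠ j) :
    sigmaijN (fun s t => M (c - s) (c - t)) i j = sigmaijN M (c - i) (c - j) := by
  unfold sigmaijN
  by_cases h : i < j
  · rw [if_pos h, if_neg (by omega : ¬ (c - i < c - j))]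
    refine finsum_mem_eq_of_bijOn (fun p : ℤ × ℤ => (c - p.1, c - p.2)) ⟨?_, ?_, ?_⟩ ?_
    · rintro ⟨a, b⟩ ⟨h1, h2⟩
      exact ⟨by simp only at h1 ⊢; omega, by simp only at h2 ⊢; omega⟩
    · rintro ⟨a, b⟩ - ⟨a', b'⟩ - hcd
      simp only [Prod.mk.injEq] at hcd ⊢
      omega
    · rintro ⟨a, b⟩ ⟨h1, h2⟩
      refine ⟨(c - a, c - b), ⟨by simp only at h1 ⊢; omega, by simp only at h2 ⊢; omega⟩, ?_⟩
      simp only [Prod.mk.injEq]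
      omega
    · rintro ⟨a, b⟩ -
      rfl
  · rw [if_neg h, if_pos (by omega : c - i < c - j)]
    refine finsum_mem_eq_of_bijOn (fun p : ℤ × ℤ => (c - p.1, c - p.2)) ⟨?_, ?_, ?_⟩ ?_
    · rintro ⟨a, b⟩ ⟨h1, h2⟩
      exact ⟨by simp only at h1 ⊢; omega, by simp only at h2 ⊢; omega⟩
    · rintro ⟨a, b⟩ - ⟨a', b'⟩ - hcd
      simp only [Prod.mk.injEq] at hcd ⊢
      omega
    · rintro ⟨a, b⟩ ⟨h1, h2⟩
      refine ⟨(c - a, c - b), ⟨by simp only at h1 ⊢; omega, by simp only at h2 ⊢; omega⟩, ?_⟩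
      simp only [Prod.mk.injEq]
      omega
    · rintro ⟨a, b⟩ -
      rfl

private noncomputable def SD (n : ℕ) (D : ℤ) : Finset (ℤ × ℤ) :=
  ((Finset.Icc (1:ℤ) (n:ℤ)) ×ˢ (Finset.Icc (1:ℤ) ((n:ℤ) + D))).filter (fun p => p.1 < p.2)

private lemma mem_SD {n : ℕ} {D : ℤ} {p : ℤ × ℤ} :
    p ∈ SD n D ↔ (1 ≤ p.1 ∧ p.1 ≤ (n:ℤ)) ∧ (1 ≤ p.2 ∧ p.2 ≤ (n:ℤ) + D) ∧ p.1 < p.2 := by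
  unfold SD
  simp only [Finset.mem_filter, Finset.mem_product, Finset.mem_Icc]
  tauto

private lemma norm_split {n : ℕ} {M : ℤ → ℤ → ℕ} {D : ℤ}
    (hbd : ∀ s t : ℤ, M s t ≠ 0 → |t - s| ≤ D) :
    normA n M = (∑ p ∈ SD n D, (p.2 - p.1 + 1).toNat.choose 2 * M p.1 p.2)
      + (∑ p ∈ SD n D, (p.2 - p.1 + 1).toNat.choose 2 * M p.2 p.1) := by
  have h1 : normA n M
      = ∑ p ∈ SD n D, (p.2 - p.1 + 1).toNat.choose 2 * (M p.1 p.2 + M p.2 p.1) := by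
    rw [normA]
    apply finsum_mem_eq_sum_of_inter_support_eq
    ext p
    simp only [Set.mem_inter_iff, Set.mem_setOf_eq, Function.mem_support, Finset.mem_coe, mem_SD]
    constructor
    · rintro ⟨⟨ha, hb, hc⟩, hs⟩
      have hsum : M p.1 p.2 + M p.2 p.1 ≠ 0 := by
        intro h0; rw [h0, mul_zero] at hs; exact hs rfl
      have hb2 : 1 ≤ p.2 ∧ p.2 ≤ (n:ℤ) + D := by
        rcases Nat.eq_zero_or_pos (M p.1 p.2) with h | h
        · have h2 : M p.2 p.1 ≠ 0 := by omega
          have := abs_le.mp (hbd p.2 p.1 h2)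
          omega
        · have := abs_le.mp (hbd p.1 p.2 (by omega))
          omega
      exact ⟨⟨⟨ha, hb⟩, hb2, hc⟩, hs⟩
    · rintro ⟨⟨⟨ha, hb⟩, -, hc⟩, hs⟩
      exact ⟨⟨ha, hb, hc⟩, hs⟩
  rw [h1, ← Finset.sum_add_distrib]
  apply Finset.sum_congr rfl
  intro p _
  rw [mul_add]

private lemma count_fold {n : ℕ} (hn : 0 < n) {D : ℤ} (hD : 0 ≤ D) (s t : ℤ)
    (hs1 : 1 ≤ s) (hs2 : s ≤ (n:ℤ)) (hst : s < t) (htD : t - s ≤ D) :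
    ∑ k ∈ Finset.Icc (-((n:ℤ) + D)) 0,
      ((SD n D).filter (fun r => s + k * (n:ℤ) ≤ r.1 ∧ r.2 ≤ t + k * (n:ℤ))).card
      = (t - s + 1).toNat.choose 2 := by
  classical
  set K : Finset ℤ := Finset.Icc (-((n:ℤ) + D)) 0 with hK
  set T : Finset (ℤ × (ℤ × ℤ)) :=
    (K ×ˢ (SD n D)).filter
      (fun x => s + x.1 * (n:ℤ) ≤ x.2.1 ∧ x.2.2 ≤ t + x.1 * (n:ℤ)) with hT
  have h1 : ∑ k ∈ K,
      ((SD n D).filter (fun r => s + k * (n:ℤ) ≤ r.1 ∧ r.2 ≤ t + k * (n:ℤ))).card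
      = T.card := by
    rw [hT, Finset.card_filter, Finset.sum_product]
    apply Finset.sum_congr rfl
    intro k _
    rw [Finset.card_filter]
  rw [h1]
  have h2 : T.card
      = (((Finset.Icc s t) ×ˢ (Finset.Icc s t)).filter (fun r => r.1 < r.2)).card := by
    apply Finset.card_nbij' (i := fun x : ℤ × (ℤ × ℤ) => (x.2.1 - x.1 * (n:ℤ), x.2.2 - x.1 * (n:ℤ)))
      (j := fun r : ℤ × ℤ =>
        ((-(kdiv n r.1)), (r.1 - kdiv n r.1 * (n:ℤ), r.2 - kdiv n r.1 * (n:ℤ))))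
    · rintro ⟨k, r⟩ hx
      rw [hT, Finset.mem_coe, Finset.mem_filter, Finset.mem_product] at hx
      obtain ⟨⟨hkK, hrSD⟩, hc1, hc2⟩ := hx
      have hr : (1 ≤ r.1 ∧ r.1 ≤ (n:ℤ)) ∧ (1 ≤ r.2 ∧ r.2 ≤ (n:ℤ) + D) ∧ r.1 < r.2 :=
        mem_SD.mp hrSD
      have hc1' : s + k * (n:ℤ) ≤ r.1 := hc1
      have hc2' : r.2 ≤ t + k * (n:ℤ) := hc2
      rw [Finset.mem_coe, Finset.mem_filter, Finset.mem_product, Finset.mem_Icc, Finset.mem_Icc]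
      refine ⟨⟨⟨?_, ?_⟩, ?_, ?_⟩, ?_⟩
      · show s ≤ r.1 - k * (n:ℤ); omega
      · show r.1 - k * (n:ℤ) ≤ t; omega
      · show s ≤ r.2 - k * (n:ℤ); omega
      · show r.2 - k * (n:ℤ) ≤ t; omega
      · show r.1 - k * (n:ℤ) < r.2 - k * (n:ℤ); omega
    · rintro ⟨a, b⟩ hr
      rw [Finset.mem_coe, Finset.mem_filter, Finset.mem_product, Finset.mem_Icc, Finset.mem_Icc] at hr
      obtain ⟨⟨⟨ha1, ha2⟩, hb1, hb2⟩, hab⟩ := hr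
      have hrep := kdiv_rep hn a
      have hknn : 0 ≤ kdiv n a := by
        unfold kdiv
        exact Int.ediv_nonneg (by omega) (by omega)
      have h5 : 0 ≤ kdiv n a * ((n:ℤ) - 1) :=
        mul_nonneg hknn (by omega)
      have h6 : kdiv n a * ((n:ℤ) - 1) = kdiv n a * (n:ℤ) - kdiv n a := by ring
      have h7 : (-(kdiv n a)) * (n:ℤ) = -(kdiv n a * (n:ℤ)) := by ring
      rw [hT, Finset.mem_coe, Finset.mem_filter, Finset.mem_product]
      refine ⟨⟨?_, ?_⟩, ?_, ?_⟩
      · rw [hK, Finset.mem_Icc]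
        show -((n:ℤ) + D) ≤ -(kdiv n a) ∧ -(kdiv n a) ≤ 0
        omega
      · rw [mem_SD]
        refine ⟨⟨?_, ?_⟩, ⟨?_, ?_⟩, ?_⟩
        · show 1 ≤ a - kdiv n a * (n:ℤ); omega
        · show a - kdiv n a * (n:ℤ) ≤ (n:ℤ); omega
        · show 1 ≤ b - kdiv n a * (n:ℤ); omega
        · show b - kdiv n a * (n:ℤ) ≤ (n:ℤ) + D; omega
        · show a - kdiv n a * (n:ℤ) < b - kdiv n a * (n:ℤ); omega
      · show s + (-(kdiv n a)) * (n:ℤ) ≤ a - kdiv n a * (n:ℤ)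
        omega
      · show b - kdiv n a * (n:ℤ) ≤ t + (-(kdiv n a)) * (n:ℤ)
        omega
    · rintro ⟨k, r⟩ hx
      rw [hT, Finset.mem_coe, Finset.mem_filter, Finset.mem_product] at hx
      obtain ⟨⟨hkK, hrSD⟩, -, -⟩ := hx
      have hr : (1 ≤ r.1 ∧ r.1 ≤ (n:ℤ)) ∧ (1 ≤ r.2 ∧ r.2 ≤ (n:ℤ) + D) ∧ r.1 < r.2 :=
        mem_SD.mp hrSD
      have hk : kdiv n (r.1 - k * (n:ℤ)) = -k := by
        have := kdiv_shift hn r.1 (-k)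
        rw [show r.1 + (-k) * (n:ℤ) = r.1 - k * (n:ℤ) by ring] at this
        rw [this, kdiv_zero_of r.1 hr.1.1 hr.1.2, zero_add]
      show ((-(kdiv n (r.1 - k * (n:ℤ))),
        (r.1 - k * (n:ℤ) - kdiv n (r.1 - k * (n:ℤ)) * (n:ℤ),
         r.2 - k * (n:ℤ) - kdiv n (r.1 - k * (n:ℤ)) * (n:ℤ))) : ℤ × (ℤ × ℤ)) = (k, r)
      rw [hk, Prod.ext_iff, Prod.ext_iff]
      refine ⟨?_, ?_, ?_⟩
      · show -(-k) = k
        ring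
      · show r.1 - k * (n:ℤ) - (-k) * (n:ℤ) = r.1
        ring
      · show r.2 - k * (n:ℤ) - (-k) * (n:ℤ) = r.2
        ring
    · rintro ⟨a, b⟩ hr
      show ((a - kdiv n a * (n:ℤ) - (-(kdiv n a)) * (n:ℤ),
        b - kdiv n a * (n:ℤ) - (-(kdiv n a)) * (n:ℤ)) : ℤ × ℤ) = (a, b)
      rw [Prod.ext_iff]
      constructor <;> simp only <;> ring
  rw [h2, auxCount s t (le_of_lt hst)]


private lemma key_upper {n : ℕ} (hn : 0 < n) {M : ℤ → ℤ → ℕ} {D : ℤ} (hD : 0 ≤ D)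
    (hper : ∀ i j : ℤ, M (i + n) (j + n) = M i j)
    (hbd : ∀ s t : ℤ, M s t ≠ 0 → |t - s| ≤ D) :
    ∑ p ∈ SD n D, sigmaijN M p.1 p.2
      = ∑ p ∈ SD n D, (p.2 - p.1 + 1).toNat.choose 2 * M p.1 p.2 := by
  classical
  set P : Finset (ℤ × ℤ) := (Finset.Icc (1 - D) (n:ℤ)) ×ˢ (Finset.Icc (1:ℤ) ((n:ℤ) + D)) with hP
  set K : Finset ℤ := Finset.Icc (-((n:ℤ) + D)) 0 with hK
  set c : ℤ × ℤ → ℕ :=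
    fun q => (((SD n D)).filter (fun p => q.1 ≤ p.1 ∧ p.2 ≤ q.2)).card with hc
  -- Step 1: each sigma as a sum over P
  have step1 : ∀ p ∈ SD n D, sigmaijN M p.1 p.2
      = ∑ q ∈ P, if q.1 ≤ p.1 ∧ p.2 ≤ q.2 then M q.1 q.2 else 0 := by
    intro p hp
    rw [mem_SD] at hp
    obtain ⟨⟨ha1, ha2⟩, ⟨hb1, hb2⟩, hab⟩ := hp
    rw [sigma_upper_eq hbd p.1 p.2 hab]
    have hcongr : ∀ q ∈ (Finset.Icc (p.2 - D) p.1) ×ˢ (Finset.Icc p.2 (p.1 + D)),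
        M q.1 q.2 = if q.1 ≤ p.1 ∧ p.2 ≤ q.2 then M q.1 q.2 else 0 := by
      intro q hq
      rw [Finset.mem_product, Finset.mem_Icc, Finset.mem_Icc] at hq
      rw [if_pos ⟨hq.1.2, hq.2.1⟩]
    rw [Finset.sum_congr rfl hcongr]
    apply Finset.sum_subset
    · intro q hq
      rw [Finset.mem_product, Finset.mem_Icc, Finset.mem_Icc] at hq
      rw [hP, Finset.mem_product, Finset.mem_Icc, Finset.mem_Icc]
      omega
    · intro q hq hq'
      rw [Finset.mem_product, Finset.mem_Icc, Finset.mem_Icc] at hq'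
      by_cases hcond : q.1 ≤ p.1 ∧ p.2 ≤ q.2
      · rw [if_pos hcond]
        by_contra hM
        have := abs_le.mp (hbd q.1 q.2 hM)
        omega
      · rw [if_neg hcond]
  -- Step 2: swap the two sums
  have step2 : ∑ p ∈ SD n D, sigmaijN M p.1 p.2 = ∑ q ∈ P, c q * M q.1 q.2 := by
    rw [Finset.sum_congr rfl step1, Finset.sum_comm]
    apply Finset.sum_congr rfl
    intro q _
    rw [hc]
    rw [← Finset.sum_filter, Finset.sum_const, smul_eq_mul]
  rw [step2]
  -- Step 3: transfer sum over P to sum over (SD n D) ×ˢ K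
  have step3 : ∑ q ∈ P, c q * M q.1 q.2
      = ∑ x ∈ (SD n D) ×ˢ K, c (x.1.1 + x.2 * n, x.1.2 + x.2 * n) * M x.1.1 x.1.2 := by
    rw [← Finset.sum_filter_ne_zero P, ← Finset.sum_filter_ne_zero ((SD n D) ×ˢ K)]
    apply Finset.sum_nbij'
      (i := fun q => ((q.1 - kdiv n q.1 * n, q.2 - kdiv n q.1 * n), kdiv n q.1))
      (j := fun x => (x.1.1 + x.2 * n, x.1.2 + x.2 * n))
    · -- hi : maps into
      intro q hq
      rw [Finset.mem_filter] at hq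
      obtain ⟨hqP, hqne⟩ := hq
      rw [hP, Finset.mem_product, Finset.mem_Icc, Finset.mem_Icc] at hqP
      have hM : M q.1 q.2 ≠ 0 := by
        intro h0; rw [h0, mul_zero] at hqne; exact hqne rfl
      have hcne : c q ≠ 0 := by
        intro h0; rw [h0, zero_mul] at hqne; exact hqne rfl
      have habs := abs_le.mp (hbd q.1 q.2 hM)
      have hwit : ∃ p', p' ∈ SD n D ∧ q.1 ≤ p'.1 ∧ p'.2 ≤ q.2 := by
        obtain ⟨p', hp'⟩ := Finset.card_ne_zero.mp hcne
        rw [Finset.mem_filter] at hp'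
        exact ⟨p', hp'.1, hp'.2⟩
      obtain ⟨p', hp'mem, hp'1, hp'2⟩ := hwit
      rw [mem_SD] at hp'mem
      have hq12 : q.1 < q.2 := by omega
      have hrep := kdiv_rep hn q.1
      have hk0 : kdiv n q.1 ≤ 0 := by
        by_cases h1 : 1 ≤ q.1
        · rw [kdiv_zero_of q.1 h1 (by omega)]
        · have h2 : q.1 - 1 < 0 := by omega
          have h3 := Int.ediv_neg_of_neg_of_pos h2 (by exact_mod_cast hn : (0:ℤ) < n)
          unfold kdiv
          omega
      have hkn : kdiv n q.1 * (n:ℤ) ≤ kdiv n q.1 := by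
        have h2 : kdiv n q.1 * ((n:ℤ) - 1) ≤ 0 :=
          mul_nonpos_of_nonpos_of_nonneg hk0 (sub_nonneg.mpr (by exact_mod_cast hn : (1:ℤ) ≤ (n:ℤ)))
        nlinarith
      have e1 : q.1 - kdiv n q.1 * (n:ℤ) + kdiv n q.1 * (n:ℤ) = q.1 := by ring
      have e2 : q.2 - kdiv n q.1 * (n:ℤ) + kdiv n q.1 * (n:ℤ) = q.2 := by ring
      have eM : M (q.1 - kdiv n q.1 * (n:ℤ)) (q.2 - kdiv n q.1 * (n:ℤ)) = M q.1 q.2 := by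
        have h4 := shiftPer hper (kdiv n q.1) (q.1 - kdiv n q.1 * (n:ℤ)) (q.2 - kdiv n q.1 * (n:ℤ))
        rw [e1, e2] at h4
        exact h4.symm
      rw [Finset.mem_filter, Finset.mem_product]
      refine ⟨⟨mem_SD.mpr ⟨⟨?_, ?_⟩, ⟨?_, ?_⟩, ?_⟩, ?_⟩, ?_⟩
      · show 1 ≤ q.1 - kdiv n q.1 * (n:ℤ); omega
      · show q.1 - kdiv n q.1 * (n:ℤ) ≤ (n:ℤ); omega
      · show 1 ≤ q.2 - kdiv n q.1 * (n:ℤ); omega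
      · show q.2 - kdiv n q.1 * (n:ℤ) ≤ (n:ℤ) + D; omega
      · show q.1 - kdiv n q.1 * (n:ℤ) < q.2 - kdiv n q.1 * (n:ℤ); omega
      · rw [hK, Finset.mem_Icc]
        omega
      · show c (q.1 - kdiv n q.1 * (n:ℤ) + kdiv n q.1 * (n:ℤ),
            q.2 - kdiv n q.1 * (n:ℤ) + kdiv n q.1 * (n:ℤ))
            * M (q.1 - kdiv n q.1 * (n:ℤ)) (q.2 - kdiv n q.1 * (n:ℤ)) ≠ 0
        rw [e1, e2, eM]
        exact hqne
    · -- hj : reverse maps into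
      rintro ⟨p, k⟩ hx
      rw [Finset.mem_filter, Finset.mem_product] at hx
      obtain ⟨⟨hpSD, hkK⟩, hne⟩ := hx
      have hM : M p.1 p.2 ≠ 0 := by
        intro h0
        apply hne
        show c (p.1 + k * (n:ℤ), p.2 + k * (n:ℤ)) * M p.1 p.2 = 0
        rw [h0, mul_zero]
      have hcne : c (p.1 + k * (n:ℤ), p.2 + k * (n:ℤ)) ≠ 0 := by
        intro h0
        apply hne
        show c (p.1 + k * (n:ℤ), p.2 + k * (n:ℤ)) * M p.1 p.2 = 0
        rw [h0, zero_mul]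
      have hwit : ∃ p', p' ∈ SD n D ∧ p.1 + k * (n:ℤ) ≤ p'.1 ∧ p'.2 ≤ p.2 + k * (n:ℤ) := by
        obtain ⟨p', hp'⟩ := Finset.card_ne_zero.mp hcne
        rw [Finset.mem_filter] at hp'
        exact ⟨p', hp'.1, hp'.2⟩
      obtain ⟨p', hp'mem, hp'1, hp'2⟩ := hwit
      rw [mem_SD] at hp'mem
      rw [mem_SD] at hpSD
      have habs := abs_le.mp (hbd p.1 p.2 hM)
      have eM : M (p.1 + k * (n:ℤ)) (p.2 + k * (n:ℤ)) = M p.1 p.2 := shiftPer hper k p.1 p.2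
      have hpSD' : (1 ≤ p.1 ∧ p.1 ≤ (n:ℤ)) ∧ (1 ≤ p.2 ∧ p.2 ≤ (n:ℤ) + D) ∧ p.1 < p.2 := hpSD
      rw [Finset.mem_filter]
      refine ⟨?_, ?_⟩
      · rw [hP, Finset.mem_product, Finset.mem_Icc, Finset.mem_Icc]
        refine ⟨⟨?_, ?_⟩, ?_, ?_⟩
        · show 1 - D ≤ p.1 + k * (n:ℤ)
          omega
        · show p.1 + k * (n:ℤ) ≤ (n:ℤ)
          omega
        · show 1 ≤ p.2 + k * (n:ℤ)
          omega
        · show p.2 + k * (n:ℤ) ≤ (n:ℤ) + D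
          omega
      · show c (p.1 + k * (n:ℤ), p.2 + k * (n:ℤ))
            * M (p.1 + k * (n:ℤ)) (p.2 + k * (n:ℤ)) ≠ 0
        rw [eM]
        exact hne
    · -- left_inv
      intro q hq
      show ((q.1 - kdiv n q.1 * (n:ℤ) + kdiv n q.1 * (n:ℤ),
          q.2 - kdiv n q.1 * (n:ℤ) + kdiv n q.1 * (n:ℤ)) : ℤ × ℤ) = q
      rw [Prod.ext_iff]
      constructor <;> simp only <;> ring
    · -- right_inv
      rintro ⟨p, k⟩ hx
      rw [Finset.mem_filter, Finset.mem_product] at hx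
      obtain ⟨⟨hpSD, hkK⟩, -⟩ := hx
      rw [mem_SD] at hpSD
      have hk : kdiv n (p.1 + k * (n:ℤ)) = k := by
        rw [kdiv_shift hn, kdiv_zero_of p.1 hpSD.1.1 hpSD.1.2, zero_add]
      show (((p.1 + k * (n:ℤ) - kdiv n (p.1 + k * (n:ℤ)) * (n:ℤ),
          p.2 + k * (n:ℤ) - kdiv n (p.1 + k * (n:ℤ)) * (n:ℤ)),
          kdiv n (p.1 + k * (n:ℤ))) : (ℤ × ℤ) × ℤ) = (p, k)
      rw [hk, Prod.ext_iff, Prod.ext_iff]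
      refine ⟨⟨?_, ?_⟩, rfl⟩ <;> simp only <;> ring
    · -- term equality
      intro q hq
      rw [Finset.mem_filter] at hq
      have e1 : q.1 - kdiv n q.1 * (n:ℤ) + kdiv n q.1 * (n:ℤ) = q.1 := by ring
      have e2 : q.2 - kdiv n q.1 * (n:ℤ) + kdiv n q.1 * (n:ℤ) = q.2 := by ring
      have eM : M (q.1 - kdiv n q.1 * (n:ℤ)) (q.2 - kdiv n q.1 * (n:ℤ)) = M q.1 q.2 := by
        have h4 := shiftPer hper (kdiv n q.1) (q.1 - kdiv n q.1 * (n:ℤ)) (q.2 - kdiv n q.1 * (n:ℤ))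
        rw [e1, e2] at h4
        exact h4.symm
      show c q * M q.1 q.2
          = c (q.1 - kdiv n q.1 * (n:ℤ) + kdiv n q.1 * (n:ℤ),
            q.2 - kdiv n q.1 * (n:ℤ) + kdiv n q.1 * (n:ℤ))
            * M (q.1 - kdiv n q.1 * (n:ℤ)) (q.2 - kdiv n q.1 * (n:ℤ))
      rw [e1, e2, eM]
  rw [step3, Finset.sum_product]
  apply Finset.sum_congr rfl
  intro p hp
  have hpS := mem_SD.mp hp
  have hsum : ∑ k ∈ K, c (p.1 + k * (n:ℤ), p.2 + k * (n:ℤ)) * M p.1 p.2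
      = (∑ k ∈ K, c (p.1 + k * (n:ℤ), p.2 + k * (n:ℤ))) * M p.1 p.2 :=
    (Finset.sum_mul _ _ _).symm
  rw [hsum]
  rcases Nat.eq_zero_or_pos (M p.1 p.2) with h0 | h0
  · rw [h0, mul_zero, mul_zero]
  · have habs := abs_le.mp (hbd p.1 p.2 (by omega))
    have hcount := count_fold hn hD p.1 p.2 hpS.1.1 hpS.1.2 hpS.2.2 (by omega)
    have hcc : ∀ k ∈ K, c (p.1 + k * (n:ℤ), p.2 + k * (n:ℤ))
        = ((SD n D).filter (fun r => p.1 + k * (n:ℤ) ≤ r.1 ∧ r.2 ≤ p.2 + k * (n:ℤ))).card :=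
      fun k _ => rfl
    rw [Finset.sum_congr rfl hcc, hK, hcount]

private noncomputable def SD2 (n : ℕ) (D : ℤ) : Finset (ℤ × ℤ) :=
  ((Finset.Icc (1 - D) (n:ℤ)) ×ˢ (Finset.Icc (1:ℤ) (n:ℤ))).filter (fun r => r.1 < r.2)

private lemma mem_SD2 {n : ℕ} {D : ℤ} {r : ℤ × ℤ} :
    r ∈ SD2 n D ↔ (1 - D ≤ r.1 ∧ r.1 ≤ (n:ℤ)) ∧ (1 ≤ r.2 ∧ r.2 ≤ (n:ℤ)) ∧ r.1 < r.2 := by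
  unfold SD2
  simp only [Finset.mem_filter, Finset.mem_product, Finset.mem_Icc]
  tauto

private lemma reflect_reindex {n : ℕ} {D : ℤ} (M : ℤ → ℤ → ℕ) :
    ∑ p ∈ SD n D, (p.2 - p.1 + 1).toNat.choose 2 * M ((n:ℤ) + 1 - p.1) ((n:ℤ) + 1 - p.2)
      = ∑ r ∈ SD2 n D, (r.2 - r.1 + 1).toNat.choose 2 * M r.2 r.1 := by
  apply Finset.sum_nbij' (i := fun p : ℤ × ℤ => ((n:ℤ) + 1 - p.2, (n:ℤ) + 1 - p.1))
    (j := fun r : ℤ × ℤ => ((n:ℤ) + 1 - r.2, (n:ℤ) + 1 - r.1))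
  · intro p hp
    have h := mem_SD.mp hp
    rw [mem_SD2]
    refine ⟨⟨?_, ?_⟩, ⟨?_, ?_⟩, ?_⟩ <;> simp only <;> omega
  · intro r hr
    have h := mem_SD2.mp hr
    rw [mem_SD]
    refine ⟨⟨?_, ?_⟩, ⟨?_, ?_⟩, ?_⟩ <;> simp only <;> omega
  · intro p _
    show (((n:ℤ) + 1 - ((n:ℤ) + 1 - p.1), (n:ℤ) + 1 - ((n:ℤ) + 1 - p.2)) : ℤ × ℤ) = p
    rw [Prod.ext_iff]
    constructor <;> simp only <;> ring
  · intro r _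
    show (((n:ℤ) + 1 - ((n:ℤ) + 1 - r.1), (n:ℤ) + 1 - ((n:ℤ) + 1 - r.2)) : ℤ × ℤ) = r
    rw [Prod.ext_iff]
    constructor <;> simp only <;> ring
  · intro p _
    show (p.2 - p.1 + 1).toNat.choose 2 * M ((n:ℤ) + 1 - p.1) ((n:ℤ) + 1 - p.2)
      = ((n:ℤ) + 1 - p.1 - ((n:ℤ) + 1 - p.2) + 1).toNat.choose 2
        * M ((n:ℤ) + 1 - p.1) ((n:ℤ) + 1 - p.2)
    congr 2
    omega

private lemma fold_lower {n : ℕ} (hn : 0 < n) {M : ℤ → ℤ → ℕ} {D : ℤ}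
    (hper : ∀ i j : ℤ, M (i + n) (j + n) = M i j)
    (hbd : ∀ s t : ℤ, M s t ≠ 0 → |t - s| ≤ D) :
    ∑ r ∈ SD2 n D, (r.2 - r.1 + 1).toNat.choose 2 * M r.2 r.1
      = ∑ r ∈ SD n D, (r.2 - r.1 + 1).toNat.choose 2 * M r.2 r.1 := by
  classical
  rw [← Finset.sum_filter_ne_zero (SD2 n D), ← Finset.sum_filter_ne_zero (SD n D)]
  apply Finset.sum_nbij'
    (i := fun r : ℤ × ℤ => (r.1 - kdiv n r.1 * (n:ℤ), r.2 - kdiv n r.1 * (n:ℤ)))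
    (j := fun r : ℤ × ℤ => (r.1 - kdiv n r.2 * (n:ℤ), r.2 - kdiv n r.2 * (n:ℤ)))
  · intro r hr
    rw [Finset.mem_filter] at hr
    obtain ⟨hr1, hr2⟩ := hr
    have h := mem_SD2.mp hr1
    have hM : M r.2 r.1 ≠ 0 := by
      intro h0; rw [h0, mul_zero] at hr2; exact hr2 rfl
    have habs := abs_le.mp (hbd r.2 r.1 hM)
    have hrep := kdiv_rep hn r.1
    have eM : M (r.2 - kdiv n r.1 * (n:ℤ)) (r.1 - kdiv n r.1 * (n:ℤ)) = M r.2 r.1 := by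
      have h4 := shiftPer hper (kdiv n r.1)
        (r.2 - kdiv n r.1 * (n:ℤ)) (r.1 - kdiv n r.1 * (n:ℤ))
      rw [show r.2 - kdiv n r.1 * (n:ℤ) + kdiv n r.1 * (n:ℤ) = r.2 by ring,
          show r.1 - kdiv n r.1 * (n:ℤ) + kdiv n r.1 * (n:ℤ) = r.1 by ring] at h4
      exact h4.symm
    rw [Finset.mem_filter]
    constructor
    · rw [mem_SD]
      refine ⟨⟨?_, ?_⟩, ⟨?_, ?_⟩, ?_⟩ <;> simp only <;> omega
    · show (r.2 - kdiv n r.1 * (n:ℤ) - (r.1 - kdiv n r.1 * (n:ℤ)) + 1).toNat.choose 2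
        * M (r.2 - kdiv n r.1 * (n:ℤ)) (r.1 - kdiv n r.1 * (n:ℤ)) ≠ 0
      rw [eM, show r.2 - kdiv n r.1 * (n:ℤ) - (r.1 - kdiv n r.1 * (n:ℤ)) + 1
        = r.2 - r.1 + 1 by ring]
      exact hr2
  · intro r hr
    rw [Finset.mem_filter] at hr
    obtain ⟨hr1, hr2⟩ := hr
    have h := mem_SD.mp hr1
    have hM : M r.2 r.1 ≠ 0 := by
      intro h0; rw [h0, mul_zero] at hr2; exact hr2 rfl
    have habs := abs_le.mp (hbd r.2 r.1 hM)
    have hrep := kdiv_rep hn r.2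
    have eM : M (r.2 - kdiv n r.2 * (n:ℤ)) (r.1 - kdiv n r.2 * (n:ℤ)) = M r.2 r.1 := by
      have h4 := shiftPer hper (kdiv n r.2)
        (r.2 - kdiv n r.2 * (n:ℤ)) (r.1 - kdiv n r.2 * (n:ℤ))
      rw [show r.2 - kdiv n r.2 * (n:ℤ) + kdiv n r.2 * (n:ℤ) = r.2 by ring,
          show r.1 - kdiv n r.2 * (n:ℤ) + kdiv n r.2 * (n:ℤ) = r.1 by ring] at h4
      exact h4.symm
    rw [Finset.mem_filter]
    constructor
    · rw [mem_SD2]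
      refine ⟨⟨?_, ?_⟩, ⟨?_, ?_⟩, ?_⟩ <;> simp only <;> omega
    · show (r.2 - kdiv n r.2 * (n:ℤ) - (r.1 - kdiv n r.2 * (n:ℤ)) + 1).toNat.choose 2
        * M (r.2 - kdiv n r.2 * (n:ℤ)) (r.1 - kdiv n r.2 * (n:ℤ)) ≠ 0
      rw [eM, show r.2 - kdiv n r.2 * (n:ℤ) - (r.1 - kdiv n r.2 * (n:ℤ)) + 1
        = r.2 - r.1 + 1 by ring]
      exact hr2
  · intro r hr
    rw [Finset.mem_filter] at hr
    have h := mem_SD2.mp hr.1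
    have hk : kdiv n (r.2 - kdiv n r.1 * (n:ℤ)) = -(kdiv n r.1) := by
      have h5 := kdiv_shift hn r.2 (-(kdiv n r.1))
      rw [show r.2 + -(kdiv n r.1) * (n:ℤ) = r.2 - kdiv n r.1 * (n:ℤ) by ring] at h5
      rw [h5, kdiv_zero_of r.2 h.2.1.1 h.2.1.2, zero_add]
    show ((r.1 - kdiv n r.1 * (n:ℤ) - kdiv n (r.2 - kdiv n r.1 * (n:ℤ)) * (n:ℤ),
        r.2 - kdiv n r.1 * (n:ℤ) - kdiv n (r.2 - kdiv n r.1 * (n:ℤ)) * (n:ℤ)) : ℤ × ℤ) = r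
    rw [hk, Prod.ext_iff]
    constructor <;> simp only <;> ring
  · intro r hr
    rw [Finset.mem_filter] at hr
    have h := mem_SD.mp hr.1
    have hk : kdiv n (r.1 - kdiv n r.2 * (n:ℤ)) = -(kdiv n r.2) := by
      have h5 := kdiv_shift hn r.1 (-(kdiv n r.2))
      rw [show r.1 + -(kdiv n r.2) * (n:ℤ) = r.1 - kdiv n r.2 * (n:ℤ) by ring] at h5
      rw [h5, kdiv_zero_of r.1 h.1.1 h.1.2, zero_add]
    show ((r.1 - kdiv n r.2 * (n:ℤ) - kdiv n (r.1 - kdiv n r.2 * (n:ℤ)) * (n:ℤ),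
        r.2 - kdiv n r.2 * (n:ℤ) - kdiv n (r.1 - kdiv n r.2 * (n:ℤ)) * (n:ℤ)) : ℤ × ℤ) = r
    rw [hk, Prod.ext_iff]
    constructor <;> simp only <;> ring
  · intro r hr
    rw [Finset.mem_filter] at hr
    obtain ⟨hr1, hr2⟩ := hr
    have hM : M r.2 r.1 ≠ 0 := by
      intro h0; rw [h0, mul_zero] at hr2; exact hr2 rfl
    have eM : M (r.2 - kdiv n r.1 * (n:ℤ)) (r.1 - kdiv n r.1 * (n:ℤ)) = M r.2 r.1 := by
      have h4 := shiftPer hper (kdiv n r.1)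
        (r.2 - kdiv n r.1 * (n:ℤ)) (r.1 - kdiv n r.1 * (n:ℤ))
      rw [show r.2 - kdiv n r.1 * (n:ℤ) + kdiv n r.1 * (n:ℤ) = r.2 by ring,
          show r.1 - kdiv n r.1 * (n:ℤ) + kdiv n r.1 * (n:ℤ) = r.1 by ring] at h4
      exact h4.symm
    show (r.2 - r.1 + 1).toNat.choose 2 * M r.2 r.1
      = (r.2 - kdiv n r.1 * (n:ℤ) - (r.1 - kdiv n r.1 * (n:ℤ)) + 1).toNat.choose 2
        * M (r.2 - kdiv n r.1 * (n:ℤ)) (r.1 - kdiv n r.1 * (n:ℤ))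
    rw [eM, show r.2 - kdiv n r.1 * (n:ℤ) - (r.1 - kdiv n r.1 * (n:ℤ)) + 1
      = r.2 - r.1 + 1 by ring]

private lemma norm_eq {n : ℕ} (hn : 0 < n) {M : ℤ → ℤ → ℕ} {D : ℤ} (hD : 0 ≤ D)
    (hper : ∀ i j : ℤ, M (i + n) (j + n) = M i j)
    (hbd : ∀ s t : ℤ, M s t ≠ 0 → |t - s| ≤ D) :
    normA n M = ∑ p ∈ SD n D, sigmaijN M p.1 p.2
      + ∑ p ∈ SD n D, sigmaijN (fun s t => M ((n:ℤ) + 1 - s) ((n:ℤ) + 1 - t)) p.1 p.2 := by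
  have hper' : ∀ i j : ℤ, (fun s t => M ((n:ℤ) + 1 - s) ((n:ℤ) + 1 - t)) (i + n) (j + n)
      = (fun s t => M ((n:ℤ) + 1 - s) ((n:ℤ) + 1 - t)) i j := by
    intro i j
    show M ((n:ℤ) + 1 - (i + n)) ((n:ℤ) + 1 - (j + n)) = M ((n:ℤ) + 1 - i) ((n:ℤ) + 1 - j)
    have h4 := shiftPer hper (-1) ((n:ℤ) + 1 - i) ((n:ℤ) + 1 - j)
    rw [show (n:ℤ) + 1 - i + (-1) * (n:ℤ) = (n:ℤ) + 1 - (i + n) by push_cast; ring,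
        show (n:ℤ) + 1 - j + (-1) * (n:ℤ) = (n:ℤ) + 1 - (j + n) by push_cast; ring] at h4
    exact h4
  have hbd' : ∀ s t : ℤ, (fun s t => M ((n:ℤ) + 1 - s) ((n:ℤ) + 1 - t)) s t ≠ 0
      → |t - s| ≤ D := by
    intro s t hst
    have h4 := hbd _ _ hst
    rw [show (n:ℤ) + 1 - t - ((n:ℤ) + 1 - s) = s - t by ring, abs_sub_comm] at h4
    exact h4
  have hA1 := key_upper hn hD hper hbd
  have hA2 := key_upper hn hD hper' hbd'
  have hF := fold_lower hn hper hbd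
  have hR := reflect_reindex (n := n) (D := D) M
  rw [norm_split hbd, ← hA1, ← hF, ← hR]
  congr 1
  exact hA2.symm

/-- If `B ≺ A` in `Θ±(n)` then `‖B‖ < ‖A‖`. -/
theorem normA_lt_of_prec (n : ℕ) (hn : 2 ≤ n) (A B : ℤ → ℤ → ℕ)
    (hA : A ∈ ThetaPM n) (hB : B ∈ ThetaPM n) (h : precRel B A) :
    normA n B < normA n A := by
  have hn1 : 0 < n := by omega
  obtain ⟨DA, hDA0, hDAbd⟩ := exists_bound hn1 hA
  obtain ⟨DB, hDB0, hDBbd⟩ := exists_bound hn1 hB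
  set D := max DA DB with hDdef
  have hD0 : 0 ≤ D := le_trans hDA0 (le_max_left _ _)
  have hAbd : ∀ s t : ℤ, A s t ≠ 0 → |t - s| ≤ D :=
    fun s t ht => le_trans (hDAbd s t ht) (le_max_left _ _)
  have hBbd : ∀ s t : ℤ, B s t ≠ 0 → |t - s| ≤ D :=
    fun s t ht => le_trans (hDBbd s t ht) (le_max_right _ _)
  have hperA := hA.1
  have hperB := hB.1
  rw [norm_eq hn1 hD0 hperA hAbd, norm_eq hn1 hD0 hperB hBbd]
  -- termwise inequalities
  have hle1 : ∀ p ∈ SD n D, sigmaijN B p.1 p.2 ≤ sigmaijN A p.1 p.2 := by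
    intro p hp
    exact h.1 p.1 p.2 (ne_of_lt (mem_SD.mp hp).2.2)
  have hle2 : ∀ p ∈ SD n D,
      sigmaijN (fun s t => B ((n:ℤ) + 1 - s) ((n:ℤ) + 1 - t)) p.1 p.2
      ≤ sigmaijN (fun s t => A ((n:ℤ) + 1 - s) ((n:ℤ) + 1 - t)) p.1 p.2 := by
    intro p hp
    have hpe := (mem_SD.mp hp).2.2
    rw [sigma_reflect ((n:ℤ) + 1) B p.1 p.2 (ne_of_lt hpe),
        sigma_reflect ((n:ℤ) + 1) A p.1 p.2 (ne_of_lt hpe)]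
    exact h.1 _ _ (by omega)
  -- the strict witness, shifted into the fundamental domain
  obtain ⟨i0, j0, hij0, hstrict⟩ := h.2
  have hrep := kdiv_rep hn1 i0
  have hshA : sigmaijN A (i0 - kdiv n i0 * (n:ℤ)) (j0 - kdiv n i0 * (n:ℤ))
      = sigmaijN A i0 j0 := by
    have h4 := sigma_shift hperA (-(kdiv n i0)) i0 j0
    rw [show i0 + -(kdiv n i0) * (n:ℤ) = i0 - kdiv n i0 * (n:ℤ) by ring,
        show j0 + -(kdiv n i0) * (n:ℤ) = j0 - kdiv n i0 * (n:ℤ) by ring] at h4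
    exact h4
  have hshB : sigmaijN B (i0 - kdiv n i0 * (n:ℤ)) (j0 - kdiv n i0 * (n:ℤ))
      = sigmaijN B i0 j0 := by
    have h4 := sigma_shift hperB (-(kdiv n i0)) i0 j0
    rw [show i0 + -(kdiv n i0) * (n:ℤ) = i0 - kdiv n i0 * (n:ℤ) by ring,
        show j0 + -(kdiv n i0) * (n:ℤ) = j0 - kdiv n i0 * (n:ℤ) by ring] at h4
    exact h4
  set i1 := i0 - kdiv n i0 * (n:ℤ) with hi1
  set j1 := j0 - kdiv n i0 * (n:ℤ) with hj1
  have hstrict1 : sigmaijN B i1 j1 < sigmaijN A i1 j1 := by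
    rw [hshA, hshB]; exact hstrict
  have hij1 : i1 ≠ j1 := by intro hcon; apply hij0; omega
  have hσA : sigmaijN A i1 j1 ≠ 0 := by omega
  rcases lt_or_gt_of_ne hij1 with hc | hc
  · -- upper witness
    have hj1D : j1 ≤ i1 + D := by
      by_contra hcon
      exact hσA (sigma_upper_zero hD0 hAbd i1 j1 (by omega))
    have hpmem : ((i1, j1) : ℤ × ℤ) ∈ SD n D := by
      rw [mem_SD]
      exact ⟨⟨hrep.1, hrep.2⟩, ⟨by omega, by omega⟩, hc⟩
    have h1 : ∑ p ∈ SD n D, sigmaijN B p.1 p.2 < ∑ p ∈ SD n D, sigmaijN A p.1 p.2 :=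
      Finset.sum_lt_sum hle1 ⟨(i1, j1), hpmem, hstrict1⟩
    have h2 := Finset.sum_le_sum hle2
    omega
  · -- lower witness, reflect it
    have hi1D : i1 ≤ j1 + D := by
      by_contra hcon
      exact hσA (sigma_lower_zero hD0 hAbd i1 j1 (by omega))
    have hpmem : (((n:ℤ) + 1 - i1, (n:ℤ) + 1 - j1) : ℤ × ℤ) ∈ SD n D := by
      rw [mem_SD]
      refine ⟨⟨by omega, by omega⟩, ⟨by omega, by omega⟩, by omega⟩
    have hstrict2 :
        sigmaijN (fun s t => B ((n:ℤ) + 1 - s) ((n:ℤ) + 1 - t)) ((n:ℤ) + 1 - i1) ((n:ℤ) + 1 - j1)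
        < sigmaijN (fun s t => A ((n:ℤ) + 1 - s) ((n:ℤ) + 1 - t))
            ((n:ℤ) + 1 - i1) ((n:ℤ) + 1 - j1) := by
      rw [sigma_reflect ((n:ℤ) + 1) B _ _ (by omega), sigma_reflect ((n:ℤ) + 1) A _ _ (by omega)]
      rw [show (n:ℤ) + 1 - ((n:ℤ) + 1 - i1) = i1 by ring,
          show (n:ℤ) + 1 - ((n:ℤ) + 1 - j1) = j1 by ring]
      exact hstrict1
    have h1 : ∑ p ∈ SD n D, sigmaijN (fun s t => B ((n:ℤ) + 1 - s) ((n:ℤ) + 1 - t)) p.1 p.2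
        < ∑ p ∈ SD n D, sigmaijN (fun s t => A ((n:ℤ) + 1 - s) ((n:ℤ) + 1 - t)) p.1 p.2 :=
      Finset.sum_lt_sum hle2 ⟨((n:ℤ) + 1 - i1, (n:ℤ) + 1 - j1), hpmem, hstrict2⟩
    have h2 := Finset.sum_le_sum hle1
    omega
end

section
/- Let n ≥ 2 and A ∈ Θ±(n). The set { B ∈ Θ±(n) : B ≺ A } is finite, where B ≺ A means σ_{i,j}(B) ≤ σ_{i,j}(A) for all i ≠ j, with strict inequality for at least one pair (i, j). -/
/-- Periodicity extends to arbitrary integer multiples of `n`. -/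
lemma theta_shift {n : ℕ} {A : ℤ → ℤ → ℕ} (hA : A ∈ ThetaPM n) (k i j : ℤ) :
    A (i + k * n) (j + k * n) = A i j := by
  induction k using Int.induction_on with
  | zero => simp
  | succ k ih =>
      have := hA.1 (i + k * n) (j + k * n)
      have e1 : (i + (k + 1) * n) = (i + k * n) + n := by ring
      have e2 : (j + (k + 1) * n) = (j + k * n) + n := by ring
      rw [e1, e2, this, ih]
  | pred k ih =>
      have h := hA.1 (i + (-(k : ℤ) - 1) * n) (j + (-(k : ℤ) - 1) * n)
      rw [show (i + (-(k : ℤ) - 1) * n) + n = i + -(k : ℤ) * n by ring,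
          show (j + (-(k : ℤ) - 1) * n) + n = j + -(k : ℤ) * n by ring] at h
      rw [← h]; exact ih

/-- Any matrix in `Θ±(n)` has bounded support width. -/
lemma theta_width {n : ℕ} (hn : 0 < n) {B : ℤ → ℤ → ℕ} (hB : B ∈ ThetaPM n) :
    ∃ W : ℕ, ∀ i j : ℤ, B i j ≠ 0 → (j - i).natAbs ≤ W := by
  have hU : (⋃ i ∈ Set.Ico (0 : ℤ) n, (fun j => (i, j)) '' {j | B i j ≠ 0}).Finite :=
    (Set.finite_Ico (0 : ℤ) n).biUnion fun i _ => ((hB.2.2 i).1).image _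
  have hV : ((fun p : ℤ × ℤ => (p.2 - p.1).natAbs) ''
      (⋃ i ∈ Set.Ico (0 : ℤ) n, (fun j => (i, j)) '' {j | B i j ≠ 0})).Finite := hU.image _
  obtain ⟨W, hWmem⟩ := hV.bddAbove
  refine ⟨W, fun i j hij => ?_⟩
  set q : ℤ := i / n with hq
  have hi' : (i - q * n) + q * n = i := by ring
  have hj' : (j - q * n) + q * n = j := by ring
  have hBij : B (i - q * n) (j - q * n) = B i j := by
    have := theta_shift hB q (i - q * n) (j - q * n)
    rw [hi', hj'] at this; exact this.symm
  have hmod : i - q * n = i % n := by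
    rw [hq, Int.emod_def]; ring
  have hlo : 0 ≤ i - q * n := by rw [hmod]; exact Int.emod_nonneg i (by positivity)
  have hhi : i - q * n < n := by rw [hmod]; exact Int.emod_lt_of_pos i (by exact_mod_cast hn)
  have hmem : ((i - q * n, j - q * n) : ℤ × ℤ) ∈
      ⋃ i ∈ Set.Ico (0 : ℤ) n, (fun j => (i, j)) '' {j | B i j ≠ 0} := by
    refine Set.mem_biUnion ⟨hlo, hhi⟩ ⟨j - q * n, ?_, rfl⟩
    simpa [hBij] using hij
  have := hWmem ⟨_, hmem, rfl⟩
  simpa using le_trans (le_of_eq (by congr 1; ring)) this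

/-- If the width bound is exceeded, `σ_{i,j}` vanishes. -/
lemma sigma_zero_of_width {A : ℤ → ℤ → ℕ} {W : ℕ}
    (hW : ∀ i j : ℤ, A i j ≠ 0 → (j - i).natAbs ≤ W) {i j : ℤ}
    (h : W < (j - i).natAbs) : sigmaijN A i j = 0 := by
  unfold sigmaijN
  split_ifs with hij
  · apply finsum_mem_of_eqOn_zero
    rintro ⟨s, t⟩ ⟨hs, ht⟩
    by_contra hne
    have := hW s t hne
    simp only at hs ht this
    omega
  · apply finsum_mem_of_eqOn_zero
    rintro ⟨s, t⟩ ⟨hs, ht⟩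
    by_contra hne
    have := hW s t hne
    simp only at hs ht this
    push_neg at hij
    omega

/-- Each entry is bounded by the corresponding `σ`. -/
lemma entry_le_sigma {n : ℕ} (hn : 0 < n) {B : ℤ → ℤ → ℕ} (hB : B ∈ ThetaPM n)
    {i j : ℤ} (hij : i ≠ j) : B i j ≤ sigmaijN B i j := by
  obtain ⟨W, hW⟩ := theta_width hn hB
  rcases lt_or_gt_of_ne hij with hlt | hgt
  · have hsub : {p : ℤ × ℤ | p.1 ≤ i ∧ j ≤ p.2} ∩
        (Function.support fun p : ℤ × ℤ => B p.1 p.2) ⊆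
        Set.Icc (j - W) i ×ˢ Set.Icc j (i + W) := by
      rintro ⟨s, t⟩ ⟨⟨hs, ht⟩, hsupp⟩
      have := hW s t hsupp
      simp only at hs ht this ⊢
      constructor <;> constructor <;> omega
    have hfin : ({p : ℤ × ℤ | p.1 ≤ i ∧ j ≤ p.2} ∩
        (Function.support fun p : ℤ × ℤ => B p.1 p.2)).Finite :=
      Set.Finite.subset ((Set.finite_Icc _ _).prod (Set.finite_Icc _ _)) hsub
    have hrw : sigmaijN B i j = ∑ p ∈ hfin.toFinset, B p.1 p.2 := by
      rw [sigmaijN, if_pos hlt]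
      exact finsum_mem_eq_sum _ hfin
    rw [hrw]
    by_cases hz : B i j = 0
    · simp [hz]
    · have hmem : ((i, j) : ℤ × ℤ) ∈ hfin.toFinset := by
        simp only [Set.Finite.mem_toFinset, Set.mem_inter_iff, Set.mem_setOf_eq,
          Function.mem_support]
        exact ⟨⟨le_refl i, le_refl j⟩, hz⟩
      exact Finset.single_le_sum (f := fun p : ℤ × ℤ => B p.1 p.2) (fun p _ => Nat.zero_le _) hmem
  · have hsub : {p : ℤ × ℤ | i ≤ p.1 ∧ p.2 ≤ j} ∩
        (Function.support fun p : ℤ × ℤ => B p.1 p.2) ⊆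
        Set.Icc i (j + W) ×ˢ Set.Icc (i - W) j := by
      rintro ⟨s, t⟩ ⟨⟨hs, ht⟩, hsupp⟩
      have := hW s t hsupp
      simp only at hs ht this ⊢
      constructor <;> constructor <;> omega
    have hfin : ({p : ℤ × ℤ | i ≤ p.1 ∧ p.2 ≤ j} ∩
        (Function.support fun p : ℤ × ℤ => B p.1 p.2)).Finite :=
      Set.Finite.subset ((Set.finite_Icc _ _).prod (Set.finite_Icc _ _)) hsub
    have hrw : sigmaijN B i j = ∑ p ∈ hfin.toFinset, B p.1 p.2 := by
      rw [sigmaijN, if_neg (not_lt.mpr (le_of_lt hgt))]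
      exact finsum_mem_eq_sum _ hfin
    rw [hrw]
    by_cases hz : B i j = 0
    · simp [hz]
    · have hmem : ((i, j) : ℤ × ℤ) ∈ hfin.toFinset := by
        simp only [Set.Finite.mem_toFinset, Set.mem_inter_iff, Set.mem_setOf_eq,
          Function.mem_support]
        exact ⟨⟨le_refl i, le_refl j⟩, hz⟩
      exact Finset.single_le_sum (f := fun p : ℤ × ℤ => B p.1 p.2) (fun p _ => Nat.zero_le _) hmem

/-- For every `A ∈ Θ±(n)`, the set `{B ∈ Θ±(n) : B ≺ A}` is finite. -/
theorem prec_set_finite (n : ℕ) (hn : 2 ≤ n) (A : ℤ → ℤ → ℕ) (hA : A ∈ ThetaPM n) :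
    {B : ℤ → ℤ → ℕ | B ∈ ThetaPM n ∧ precRel B A}.Finite := by
  have hn0 : 0 < n := by omega
  obtain ⟨W, hW⟩ := theta_width hn0 hA
  set S := {B : ℤ → ℤ → ℕ | B ∈ ThetaPM n ∧ precRel B A} with hS
  -- entries of elements of S vanish beyond width W
  have hkill : ∀ B ∈ S, ∀ i j : ℤ, W < (j - i).natAbs → B i j = 0 := by
    rintro B ⟨hBmem, hBprec, _⟩ i j h
    have hij : i ≠ j := by intro e; subst e; simp at h
    have h1 : B i j ≤ sigmaijN B i j := entry_le_sigma hn0 hBmem hij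
    have h2 : sigmaijN B i j ≤ sigmaijN A i j := hBprec i j hij
    have h3 : sigmaijN A i j = 0 := sigma_zero_of_width hW h
    omega
  -- the window
  set K : Finset (ℤ × ℤ) := Finset.Ico (0 : ℤ) n ×ˢ Finset.Icc (-(W : ℤ)) (n + W) with hK
  set M : ℕ := K.sup (fun p => sigmaijN A p.1 p.2) with hM
  set f : (ℤ → ℤ → ℕ) → (K → ℕ) := fun B p => B p.1.1 p.1.2 with hf
  apply Set.Finite.of_finite_image (f := f)
  · apply Set.Finite.subset (Set.Finite.pi (fun _ : K => Set.finite_Iic M))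
    rintro g ⟨B, hB, rfl⟩
    rw [Set.mem_univ_pi]
    rintro ⟨⟨i, j⟩, hp⟩
    simp only [Set.mem_Iic, hf]
    by_cases hij : i = j
    · subst hij
      rw [hB.1.2.1 i]
      exact Nat.zero_le _
    · calc B i j ≤ sigmaijN B i j := entry_le_sigma hn0 hB.1 hij
        _ ≤ sigmaijN A i j := hB.2.1 i j hij
        _ ≤ M := Finset.le_sup (f := fun p : ℤ × ℤ => sigmaijN A p.1 p.2) hp
  · rintro B hB B' hB' hfeq
    funext i j
    by_cases hw : W < (j - i).natAbs
    · rw [hkill B hB i j hw, hkill B' hB' i j hw]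
    · push_neg at hw
      set q : ℤ := i / n with hq
      have hmod : i - q * n = i % n := by rw [hq, Int.emod_def]; ring
      have hlo : 0 ≤ i - q * n := by rw [hmod]; exact Int.emod_nonneg i (by positivity)
      have hhi : i - q * n < n := by
        rw [hmod]; exact Int.emod_lt_of_pos i (by exact_mod_cast hn0)
      have hBe : B (i - q * n) (j - q * n) = B i j := by
        have := theta_shift hB.1 q (i - q * n) (j - q * n)
        rw [show (i - q * n) + q * n = i by ring, show (j - q * n) + q * n = j by ring] at this
        exact this.symm
      have hB'e : B' (i - q * n) (j - q * n) = B' i j := by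
        have := theta_shift hB'.1 q (i - q * n) (j - q * n)
        rw [show (i - q * n) + q * n = i by ring, show (j - q * n) + q * n = j by ring] at this
        exact this.symm
      have hmem : ((i - q * n, j - q * n) : ℤ × ℤ) ∈ K := by
        rw [hK, Finset.mem_product, Finset.mem_Ico, Finset.mem_Icc]
        refine ⟨⟨hlo, hhi⟩, ?_, ?_⟩ <;> omega
      have := congrFun hfeq ⟨(i - q * n, j - q * n), hmem⟩
      simp only [hf] at this
      rw [← hBe, ← hB'e, this]
end
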